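/- Let s > 1/2 and let Z_{N−1} denote the Nth roots of unity on the unit circle with one point removed. With B̃_{2s}(cos φ) = 2 Σ_{ℓ=1}^∞ cos(ℓφ)/(1+ℓ²)^s, the squared worst-case error for W_2^s(S¹) satisfies wce(Q[Z_{N−1}]; W_2^s)² = (2N(N−2)/(N−1)²) Σ_{ν=1}^∞ (1+ν²N²)^{−s} + B̃_{2s}(1)/(N−1)². In particular, for s > 1 there are constants 0 < c ≤ C with c/N ≤ wce(Q[Z_{N−1}]; W_2^s) ≤ C/N for all N ≥ 3, so (Z_{N−1}) is not a QMC design sequence for W_2^s(S¹) when s > 1. -/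

import Mathlib

open Real Finset

/-- The zonal Bessel kernel (constant term removed) on the unit circle, as a function of the
angle: `B̃_s(cos φ) = 2 Σ_{ℓ≥1} cos(ℓφ)/(1+ℓ²)^{s/2}`. -/
noncomputable def circleBesselKernel (s : ℝ) (φ : ℝ) : ℝ :=
  2 * ∑' ℓ : ℕ, Real.cos (((ℓ : ℝ) + 1) * φ) / (1 + ((ℓ : ℝ) + 1) ^ 2) ^ (s / 2)

/-- Squared worst-case error for the `N`th roots of unity with the point `j = 0` removed,
via the reproducing-kernel formula. -/
noncomputable def wceSqRootsMinusOne (s : ℝ) (N : ℕ) : ℝ :=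
  (1 / ((N : ℝ) - 1) ^ 2) * ∑ j ∈ Finset.Ico 1 N, ∑ k ∈ Finset.Ico 1 N,
    circleBesselKernel (2 * s) (2 * π * ((j : ℝ) - (k : ℝ)) / N)

lemma sq_rpow_neg (x : ℝ) (hx : 0 < x) (s : ℝ) : (x ^ 2) ^ (-s) = x ^ (-(2 * s)) := by
  rw [← Real.rpow_natCast x 2, ← Real.rpow_mul hx.le]
  norm_num

lemma summable_shift (p : ℝ) (hp : 1 < p) : Summable (fun n : ℕ => ((n : ℝ) + 1) ^ (-p)) := by
  have h := summable_one_div_nat_rpow.mpr hp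
  have h2 := (summable_nat_add_iff 1).mpr h
  refine h2.congr fun n => ?_
  rw [one_div, ← Real.rpow_neg (by positivity)]
  push_cast
  ring_nf

lemma w_summable (s : ℝ) (hs : 1 / 2 < s) :
    Summable (fun ℓ : ℕ => (1 + ((ℓ : ℝ) + 1) ^ 2) ^ (-s)) := by
  refine Summable.of_nonneg_of_le (fun ℓ => by positivity)
    (fun ℓ => ?_) (summable_shift (2 * s) (by linarith))
  have h1 : (0:ℝ) < ((ℓ : ℝ) + 1) ^ 2 := by positivity
  calc (1 + ((ℓ : ℝ) + 1) ^ 2) ^ (-s) ≤ (((ℓ : ℝ) + 1) ^ 2) ^ (-s) :=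
        Real.rpow_le_rpow_of_nonpos h1 (by linarith) (by linarith)
    _ = ((ℓ : ℝ) + 1) ^ (-(2 * s)) := sq_rpow_neg _ (by positivity) s

lemma root_sum (N m : ℕ) (hN : 2 ≤ N) :
    ∑ j ∈ Finset.range N, Complex.exp ((2 * π * m * j / N : ℝ) * Complex.I) =
      if N ∣ m then (N : ℂ) else 0 := by
  have hN0 : (N : ℂ) ≠ 0 := by exact_mod_cast (by omega : N ≠ 0)
  have hNr : (N : ℝ) ≠ 0 := by exact_mod_cast (by omega : N ≠ 0)
  have h2π : (2 * (π : ℂ)) ≠ 0 := by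
    simp [Real.pi_ne_zero, Complex.ofReal_ne_zero]
  set ζ : ℂ := Complex.exp ((2 * π * m / N : ℝ) * Complex.I) with hζ
  have hpow : ∀ j : ℕ, Complex.exp ((2 * π * m * j / N : ℝ) * Complex.I) = ζ ^ j := by
    intro j
    rw [hζ, ← Complex.exp_nat_mul]
    congr 1
    push_cast
    ring
  rw [Finset.sum_congr rfl (fun j _ => hpow j)]
  have hζN : ζ ^ N = 1 := by
    rw [hζ, ← Complex.exp_nat_mul]
    have h : (N : ℂ) * ((2 * π * m / N : ℝ) * Complex.I) = (m : ℂ) * (2 * π * Complex.I) := by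
      push_cast
      field_simp
    rw [h, ← Complex.exp_int_mul_two_pi_mul_I (m : ℤ)]
    push_cast
    ring_nf
  have hζ1 : ζ = 1 ↔ N ∣ m := by
    rw [hζ, Complex.exp_eq_one_iff]
    constructor
    · rintro ⟨n, hn⟩
      push_cast at hn
      field_simp at hn
      have h1 : 2 * (π : ℂ) * m * Complex.I = 2 * π * ((n : ℂ) * N) * Complex.I := by
        linear_combination (2 * (π : ℂ) * Complex.I) * hn
      have h2 : (2 * (π : ℂ)) * (m : ℂ) = (2 * π) * ((n : ℂ) * N) := by
        have := mul_right_cancel₀ Complex.I_ne_zero h1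
        linear_combination this
      have h3 : (m : ℂ) = n * N := mul_left_cancel₀ h2π h2
      have h4 : (m : ℤ) = n * N := by exact_mod_cast h3
      exact Int.natCast_dvd_natCast.mp ⟨n, by rw [h4]; ring⟩
    · rintro ⟨k, rfl⟩
      exact ⟨k, by push_cast; field_simp⟩
  by_cases hd : N ∣ m
  · simp only [hd, if_true]
    rw [hζ1.2 hd]
    simp
  · simp only [hd, if_false]
    have hζne : ζ ≠ 1 := fun h => hd (hζ1.1 h)
    rw [geom_sum_eq hζne, hζN]
    simp

lemma cos_double_sum (N m : ℕ) (hN : 2 ≤ N) :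
    ∑ j ∈ Finset.Ico 1 N, ∑ k ∈ Finset.Ico 1 N,
      Real.cos ((m : ℝ) * (2 * π * ((j : ℝ) - (k : ℝ)) / N)) =
      if N ∣ m then ((N : ℝ) - 1) ^ 2 else 1 := by
  have hNr : (N : ℝ) ≠ 0 := by exact_mod_cast (by omega : N ≠ 0)
  set e : ℕ → ℂ := fun j => Complex.exp ((2 * π * m * j / N : ℝ) * Complex.I) with he
  set S : ℂ := ∑ j ∈ Finset.Ico 1 N, e j with hS
  -- S value
  have hS' : S = (if N ∣ m then (N : ℂ) else 0) - 1 := by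
    rw [hS, ← root_sum N m hN]
    have h0 : (0 : ℕ) ∈ Finset.range N := by simp; omega
    rw [Finset.range_eq_Ico, ← Finset.sum_erase_add _ _ (by simp; omega : (0:ℕ) ∈ Finset.Ico 0 N)]
    have : (Finset.Ico 0 N).erase 0 = Finset.Ico 1 N := by
      ext x
      simp [Finset.mem_Ico, Finset.mem_erase]
      omega
    rw [this]
    have : e 0 = 1 := by simp [he]
    rw [he] at this ⊢
    simp only [this]
    ring
  -- each cos term
  have hterm : ∀ j k : ℕ, Real.cos ((m : ℝ) * (2 * π * ((j : ℝ) - (k : ℝ)) / N)) =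
      (e j * (starRingEnd ℂ) (e k)).re := by
    intro j k
    have hconj : (starRingEnd ℂ) (e k) = Complex.exp ((-(2 * π * m * k / N) : ℝ) * Complex.I) := by
      rw [he, ← Complex.exp_conj]
      congr 1
      rw [map_mul, Complex.conj_ofReal, Complex.conj_I]
      push_cast
      ring
    rw [he] at *
    rw [hconj, ← Complex.exp_add, ← add_mul, ← Complex.ofReal_add,
      Complex.exp_ofReal_mul_I_re]
    congr 1
    field_simp
    ring
  calc ∑ j ∈ Finset.Ico 1 N, ∑ k ∈ Finset.Ico 1 N,
      Real.cos ((m : ℝ) * (2 * π * ((j : ℝ) - (k : ℝ)) / N))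
      = ∑ j ∈ Finset.Ico 1 N, ∑ k ∈ Finset.Ico 1 N, (e j * (starRingEnd ℂ) (e k)).re := by
        exact Finset.sum_congr rfl fun j _ => Finset.sum_congr rfl fun k _ => hterm j k
    _ = (S * (starRingEnd ℂ) S).re := by
        rw [hS, Finset.sum_mul, Complex.re_sum]
        refine Finset.sum_congr rfl fun j _ => ?_
        rw [map_sum, Finset.mul_sum, Complex.re_sum]
    _ = if N ∣ m then ((N : ℝ) - 1) ^ 2 else 1 := by
        rw [Complex.mul_conj]
        by_cases hd : N ∣ m
        · rw [hS', if_pos hd, if_pos hd]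
          push_cast
          simp [Complex.normSq_apply]
          ring
        · rw [hS', if_neg hd, if_neg hd]
          norm_num

lemma kernel_eq (s : ℝ) (φ : ℝ) :
    circleBesselKernel (2 * s) φ =
      2 * ∑' ℓ : ℕ, Real.cos (((ℓ : ℝ) + 1) * φ) * (1 + ((ℓ : ℝ) + 1) ^ 2) ^ (-s) := by
  unfold circleBesselKernel
  congr 1
  refine tsum_congr fun ℓ => ?_
  have h2 : 2 * s / 2 = s := by ring
  rw [h2, Real.rpow_neg (by positivity), div_eq_mul_inv]

lemma kernel_zero (s : ℝ) :
    circleBesselKernel (2 * s) 0 = 2 * ∑' ℓ : ℕ, (1 + ((ℓ : ℝ) + 1) ^ 2) ^ (-s) := by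
  rw [kernel_eq]
  congr 1
  refine tsum_congr fun ℓ => ?_
  simp

lemma main_id (s : ℝ) (hs : 1 / 2 < s) (N : ℕ) (hN : 2 ≤ N) :
    wceSqRootsMinusOne s N =
      (2 * (N : ℝ) * ((N : ℝ) - 2) / ((N : ℝ) - 1) ^ 2) *
          ∑' ν : ℕ, (1 + ((ν : ℝ) + 1) ^ 2 * (N : ℝ) ^ 2) ^ (-s) +
        circleBesselKernel (2 * s) 0 / ((N : ℝ) - 1) ^ 2 := by
  have hNr2 : (2 : ℝ) ≤ (N : ℝ) := by exact_mod_cast hN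
  set w : ℕ → ℝ := fun ℓ => (1 + ((ℓ : ℝ) + 1) ^ 2) ^ (-s) with hwdef
  have hw : Summable w := w_summable s hs
  have hwpos : ∀ ℓ, 0 < w ℓ := fun ℓ => Real.rpow_pos_of_pos (by positivity) _
  have hcos : ∀ j k : ℕ, Summable (fun ℓ : ℕ =>
      Real.cos (((ℓ : ℝ) + 1) * (2 * π * ((j : ℝ) - (k : ℝ)) / N)) * w ℓ) := by
    intro j k
    apply Summable.of_norm_bounded hw
    intro ℓ
    rw [Real.norm_eq_abs, abs_mul, abs_of_pos (hwpos ℓ)]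
    exact mul_le_of_le_one_left (hwpos ℓ).le (abs_cos_le_one _)
  set c : ℝ := ((N : ℝ) - 1) ^ 2 - 1 with hcdef
  have hc0 : 0 ≤ c := by nlinarith
  set g : ℕ → ℝ := fun ℓ => if N ∣ (ℓ + 1) then c * w ℓ else 0 with hgdef
  have hg : Summable g := by
    refine Summable.of_nonneg_of_le (fun ℓ => ?_) (fun ℓ => ?_) (hw.mul_left c)
    · by_cases h : N ∣ (ℓ + 1) <;> simp [hgdef, h] <;> positivity
    · by_cases h : N ∣ (ℓ + 1) <;> simp [hgdef, h]
      positivity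
  have hh : ∀ ν : ℕ, g (N * ν + (N - 1)) = c * (1 + ((ν : ℝ) + 1) ^ 2 * (N : ℝ) ^ 2) ^ (-s) := by
    intro ν
    have hd : N ∣ (N * ν + (N - 1)) + 1 := by
      have h1 : N * ν + (N - 1) + 1 = N * (ν + 1) := by rw [Nat.mul_succ]; omega
      rw [h1]; exact Dvd.intro _ rfl
    have hcast : ((N * ν + (N - 1) : ℕ) : ℝ) + 1 = ((ν : ℝ) + 1) * (N : ℝ) := by
      have h1 : 1 ≤ N := by omega
      push_cast [Nat.cast_sub h1]
      ring
    simp only [hgdef, hd, if_pos, hwdef]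
    congr 2
    rw [hcast]
    ring
  have hsupp : Function.support g ⊆ Set.range (fun ν : ℕ => N * ν + (N - 1)) := by
    intro ℓ hℓ
    have hdvd : N ∣ (ℓ + 1) := by
      by_contra h
      simp [hgdef, h] at hℓ
    obtain ⟨k, hk⟩ := hdvd
    rcases Nat.eq_zero_or_pos k with rfl | hk1
    · simp at hk
    · obtain ⟨k', rfl⟩ : ∃ k', k = k' + 1 := ⟨k - 1, by omega⟩
      refine ⟨k', ?_⟩
      have h2 : N * (k' + 1) = N * k' + N := by ring
      simp only []
      omega
  have hinj : Function.Injective (fun ν : ℕ => N * ν + (N - 1)) := by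
    intro a b h
    simp only [] at h
    have h2 : N * a = N * b := by omega
    exact Nat.eq_of_mul_eq_mul_left (by omega) h2
  have htsumg : ∑' ℓ, g ℓ = c * ∑' ν : ℕ, (1 + ((ν : ℝ) + 1) ^ 2 * (N : ℝ) ^ 2) ^ (-s) := by
    rw [← hinj.tsum_eq hsupp]
    simp_rw [hh]
    exact tsum_mul_left
  -- the double sum
  have hdouble : ∑ j ∈ Finset.Ico 1 N, ∑ k ∈ Finset.Ico 1 N,
      circleBesselKernel (2 * s) (2 * π * ((j : ℝ) - (k : ℝ)) / N) =
      2 * ((∑' ℓ, w ℓ) + ∑' ℓ, g ℓ) := by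
    have step1 : ∀ j ∈ Finset.Ico 1 N, ∀ k ∈ Finset.Ico 1 N,
        circleBesselKernel (2 * s) (2 * π * ((j : ℝ) - (k : ℝ)) / N) =
        2 * ∑' ℓ : ℕ, Real.cos (((ℓ : ℝ) + 1) * (2 * π * ((j : ℝ) - (k : ℝ)) / N)) * w ℓ :=
      fun j _ k _ => kernel_eq s _
    calc ∑ j ∈ Finset.Ico 1 N, ∑ k ∈ Finset.Ico 1 N,
        circleBesselKernel (2 * s) (2 * π * ((j : ℝ) - (k : ℝ)) / N)
        = ∑ j ∈ Finset.Ico 1 N, ∑ k ∈ Finset.Ico 1 N,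
            2 * ∑' ℓ : ℕ, Real.cos (((ℓ : ℝ) + 1) * (2 * π * ((j : ℝ) - (k : ℝ)) / N)) * w ℓ :=
          Finset.sum_congr rfl fun j hj => Finset.sum_congr rfl fun k hk => step1 j hj k hk
      _ = 2 * ∑ j ∈ Finset.Ico 1 N, ∑ k ∈ Finset.Ico 1 N,
            ∑' ℓ : ℕ, Real.cos (((ℓ : ℝ) + 1) * (2 * π * ((j : ℝ) - (k : ℝ)) / N)) * w ℓ := by
          rw [Finset.mul_sum]
          exact Finset.sum_congr rfl fun j _ => (Finset.mul_sum _ _ _).symm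
      _ = 2 * ∑' ℓ : ℕ, ∑ j ∈ Finset.Ico 1 N, ∑ k ∈ Finset.Ico 1 N,
            Real.cos (((ℓ : ℝ) + 1) * (2 * π * ((j : ℝ) - (k : ℝ)) / N)) * w ℓ := by
          congr 1
          have inner : ∀ j : ℕ, ∑ k ∈ Finset.Ico 1 N,
              ∑' ℓ : ℕ, Real.cos (((ℓ : ℝ) + 1) * (2 * π * ((j : ℝ) - (k : ℝ)) / N)) * w ℓ =
              ∑' ℓ : ℕ, ∑ k ∈ Finset.Ico 1 N,
                Real.cos (((ℓ : ℝ) + 1) * (2 * π * ((j : ℝ) - (k : ℝ)) / N)) * w ℓ :=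
            fun j => (Summable.tsum_finsetSum fun k _ => hcos j k).symm
          rw [Finset.sum_congr rfl fun j _ => inner j]
          exact (Summable.tsum_finsetSum fun j _ => summable_sum fun k _ => hcos j k).symm
      _ = 2 * ∑' ℓ : ℕ, ((if N ∣ (ℓ + 1) then ((N : ℝ) - 1) ^ 2 else 1) * w ℓ) := by
          congr 1
          refine tsum_congr fun ℓ => ?_
          have hcast : ((ℓ : ℝ) + 1) = ((ℓ + 1 : ℕ) : ℝ) := by push_cast; ring
          calc ∑ j ∈ Finset.Ico 1 N, ∑ k ∈ Finset.Ico 1 N,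
              Real.cos (((ℓ : ℝ) + 1) * (2 * π * ((j : ℝ) - (k : ℝ)) / N)) * w ℓ
              = (∑ j ∈ Finset.Ico 1 N, ∑ k ∈ Finset.Ico 1 N,
                  Real.cos (((ℓ + 1 : ℕ) : ℝ) * (2 * π * ((j : ℝ) - (k : ℝ)) / N))) * w ℓ := by
                rw [Finset.sum_mul]
                refine Finset.sum_congr rfl fun j _ => ?_
                rw [Finset.sum_mul, hcast]
            _ = (if N ∣ (ℓ + 1) then ((N : ℝ) - 1) ^ 2 else 1) * w ℓ := by
                rw [cos_double_sum N (ℓ + 1) hN]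
      _ = 2 * ((∑' ℓ, w ℓ) + ∑' ℓ, g ℓ) := by
          congr 1
          rw [← Summable.tsum_add hw hg]
          refine tsum_congr fun ℓ => ?_
          by_cases h : N ∣ (ℓ + 1) <;> simp [hgdef, h] <;> ring
  unfold wceSqRootsMinusOne
  rw [hdouble, htsumg, kernel_zero s]
  have hwW : (∑' ℓ, w ℓ) = ∑' ℓ : ℕ, (1 + ((ℓ : ℝ) + 1) ^ 2) ^ (-s) := rfl
  rw [hwW, hcdef]
  ring

set_option maxHeartbeats 1000000 in
lemma part2 (s : ℝ) (hs : 1 / 2 < s) (hs1 : 1 < s) :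
    ∃ c C : ℝ, 0 < c ∧ c ≤ C ∧ ∀ N : ℕ, 3 ≤ N →
      c / N ≤ Real.sqrt (wceSqRootsMinusOne s N) ∧
      Real.sqrt (wceSqRootsMinusOne s N) ≤ C / N := by
  set A : ℝ := circleBesselKernel (2 * s) 0 with hAdef
  have hw := w_summable s hs
  have hA : 0 < A := by
    rw [hAdef, kernel_zero s]
    have := Summable.tsum_pos hw (fun ℓ => (Real.rpow_pos_of_pos (by positivity) _).le) 0
      (Real.rpow_pos_of_pos (by positivity) _)
    linarith
  set C0 : ℝ := ∑' ν : ℕ, ((ν : ℝ) + 1) ^ (-(2 : ℝ)) with hC0def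
  have hC0sum : Summable (fun ν : ℕ => ((ν : ℝ) + 1) ^ (-(2 : ℝ))) :=
    summable_shift 2 one_lt_two
  have hC00 : 0 ≤ C0 :=
    tsum_nonneg fun ν => (Real.rpow_pos_of_pos (by positivity) _).le
  refine ⟨Real.sqrt A, Real.sqrt (4 * C0 + 3 * A), Real.sqrt_pos.mpr hA,
    Real.sqrt_le_sqrt (by linarith), ?_⟩
  intro N hN3
  have hN2 : 2 ≤ N := by omega
  have hNr : (3 : ℝ) ≤ (N : ℝ) := by exact_mod_cast hN3
  have hNpos : (0 : ℝ) < (N : ℝ) := by linarith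
  have hN1pos : (0 : ℝ) < ((N : ℝ) - 1) ^ 2 := by nlinarith
  set H : ℝ := ∑' ν : ℕ, (1 + ((ν : ℝ) + 1) ^ 2 * (N : ℝ) ^ 2) ^ (-s) with hHdef
  have hHsum : Summable (fun ν : ℕ => (1 + ((ν : ℝ) + 1) ^ 2 * (N : ℝ) ^ 2) ^ (-s)) := by
    refine Summable.of_nonneg_of_le
      (fun ν => (Real.rpow_pos_of_pos (by positivity) _).le) (fun ν => ?_) hw
    exact Real.rpow_le_rpow_of_nonpos (by positivity) (by nlinarith) (by linarith)
  have hH0 : 0 ≤ H := tsum_nonneg fun ν => (Real.rpow_pos_of_pos (by positivity) _).le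
  -- upper bound on H
  have hHle : H ≤ C0 / (N : ℝ) ^ 2 := by
    have hterm : ∀ ν : ℕ, (1 + ((ν : ℝ) + 1) ^ 2 * (N : ℝ) ^ 2) ^ (-s) ≤
        ((ν : ℝ) + 1) ^ (-(2 : ℝ)) * ((N : ℝ) ^ 2)⁻¹ := by
      intro ν
      have hy : (1 : ℝ) ≤ ((ν : ℝ) + 1) * (N : ℝ) := by nlinarith [Nat.cast_nonneg (α := ℝ) ν]
      have hy0 : (0 : ℝ) < ((ν : ℝ) + 1) * (N : ℝ) := by linarith
      calc (1 + ((ν : ℝ) + 1) ^ 2 * (N : ℝ) ^ 2) ^ (-s)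
          ≤ ((((ν : ℝ) + 1) * (N : ℝ)) ^ 2) ^ (-s) := by
            refine Real.rpow_le_rpow_of_nonpos (by positivity) (by nlinarith) (by linarith)
        _ = (((ν : ℝ) + 1) * (N : ℝ)) ^ (-(2 * s)) := sq_rpow_neg _ hy0 s
        _ ≤ (((ν : ℝ) + 1) * (N : ℝ)) ^ (-(2 : ℝ)) :=
            Real.rpow_le_rpow_of_exponent_le hy (by linarith)
        _ = ((ν : ℝ) + 1) ^ (-(2 : ℝ)) * ((N : ℝ)) ^ (-(2 : ℝ)) :=
            Real.mul_rpow (by positivity) (by positivity)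
        _ = ((ν : ℝ) + 1) ^ (-(2 : ℝ)) * ((N : ℝ) ^ 2)⁻¹ := by
            rw [← Real.rpow_neg_one, sq_rpow_neg _ hNpos 1]
            norm_num
    calc H ≤ ∑' ν : ℕ, ((ν : ℝ) + 1) ^ (-(2 : ℝ)) * ((N : ℝ) ^ 2)⁻¹ :=
          Summable.tsum_le_tsum hterm hHsum (hC0sum.mul_right _)
      _ = C0 * ((N : ℝ) ^ 2)⁻¹ := tsum_mul_right
      _ = C0 / (N : ℝ) ^ 2 := by rw [div_eq_mul_inv]
  have hId := main_id s hs N hN2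
  -- coefficient bounds
  have hcoef0 : 0 ≤ 2 * (N : ℝ) * ((N : ℝ) - 2) / ((N : ℝ) - 1) ^ 2 :=
    div_nonneg (by nlinarith) hN1pos.le
  have hcoef2 : 2 * (N : ℝ) * ((N : ℝ) - 2) / ((N : ℝ) - 1) ^ 2 ≤ 2 := by
    rw [div_le_iff₀ hN1pos]
    nlinarith
  -- lower bound on wceSq
  have hlow : Real.sqrt A ^ 2 / (N : ℝ) ^ 2 ≤ wceSqRootsMinusOne s N := by
    rw [Real.sq_sqrt hA.le, hId]
    have h1 : A / (N : ℝ) ^ 2 ≤ A / ((N : ℝ) - 1) ^ 2 := by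
      apply div_le_div_of_nonneg_left hA.le hN1pos
      nlinarith
    nlinarith [mul_nonneg hcoef0 hH0]
  have hup : wceSqRootsMinusOne s N ≤ Real.sqrt (4 * C0 + 3 * A) ^ 2 / (N : ℝ) ^ 2 := by
    rw [Real.sq_sqrt (by linarith), hId]
    have h1 : 2 * (N : ℝ) * ((N : ℝ) - 2) / ((N : ℝ) - 1) ^ 2 * H ≤ 2 * (C0 / (N : ℝ) ^ 2) := by
      calc 2 * (N : ℝ) * ((N : ℝ) - 2) / ((N : ℝ) - 1) ^ 2 * H ≤ 2 * H := by nlinarith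
        _ ≤ 2 * (C0 / (N : ℝ) ^ 2) := by linarith
    have h2 : A / ((N : ℝ) - 1) ^ 2 ≤ 3 * A / (N : ℝ) ^ 2 := by
      rw [div_le_div_iff₀ hN1pos (by positivity)]
      have hq : (N : ℝ) ^ 2 ≤ 3 * ((N : ℝ) - 1) ^ 2 := by
        nlinarith [mul_nonneg (by linarith : (0:ℝ) ≤ (N:ℝ)) (by linarith : (0:ℝ) ≤ (N:ℝ) - 3)]
      have := mul_le_mul_of_nonneg_left hq hA.le
      linarith
    have h3 : 2 * (C0 / (N : ℝ) ^ 2) + 3 * A / (N : ℝ) ^ 2 ≤ (4 * C0 + 3 * A) / (N : ℝ) ^ 2 := by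
      have he : 2 * (C0 / (N : ℝ) ^ 2) + 3 * A / (N : ℝ) ^ 2 = (2 * C0 + 3 * A) / (N : ℝ) ^ 2 := by
        ring
      rw [he]
      gcongr
      linarith
    linarith
  have hwce0 : 0 ≤ wceSqRootsMinusOne s N := le_trans (by positivity) hlow
  constructor
  · have := Real.sqrt_le_sqrt hlow
    rwa [Real.sqrt_div (by positivity) _, Real.sqrt_sq (Real.sqrt_nonneg _),
      Real.sqrt_sq hNpos.le] at this
  · have := Real.sqrt_le_sqrt hup
    rwa [Real.sqrt_div (by positivity) _, Real.sqrt_sq (Real.sqrt_nonneg _),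
      Real.sqrt_sq hNpos.le] at this

theorem roots_of_unity_minus_one_wce (s : ℝ) (hs : 1 / 2 < s) :
    (∀ N : ℕ, 2 ≤ N →
      wceSqRootsMinusOne s N =
        (2 * (N : ℝ) * ((N : ℝ) - 2) / ((N : ℝ) - 1) ^ 2) *
            ∑' ν : ℕ, (1 + ((ν : ℝ) + 1) ^ 2 * (N : ℝ) ^ 2) ^ (-s) +
          circleBesselKernel (2 * s) 0 / ((N : ℝ) - 1) ^ 2) ∧
    (1 < s → ∃ c C : ℝ, 0 < c ∧ c ≤ C ∧ ∀ N : ℕ, 3 ≤ N →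
      c / N ≤ Real.sqrt (wceSqRootsMinusOne s N) ∧
      Real.sqrt (wceSqRootsMinusOne s N) ≤ C / N) := by
  exact ⟨fun N hN => main_id s hs N hN, fun hs1 => part2 s hs hs1⟩
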